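/- For the extended sine-skewed von Mises density of order m, all third-order partial derivatives of the log-likelihood contribution θ ↦ log(2 G_m(λ sin(θ−μ))) with respect to (μ, λ) are uniformly bounded when λ is restricted to [−1+δ, 1−δ] for fixed δ ∈ (0,1): each such derivative is bounded in absolute value by a constant depending only on m and δ, uniformly over θ ∈ ℝ, μ ∈ ℝ, λ ∈ [−1+δ, 1−δ]. -/

import Mathlib

open Real MeasureTheory intervalIntegral
open scoped ContDiff

/-- Normalizing constant `C_m = Γ(2(m+1)) / (2^{2m+1} Γ(m+1)^2)`. -/
noncomputable def Cm (m : ℕ) : ℝ :=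
  Real.Gamma (2 * (m + 1)) / (2 ^ (2 * m + 1) * Real.Gamma (m + 1) ^ 2)

/-- The density `g_m(x) = C_m (1 - x^2)^m`. -/
noncomputable def gm (m : ℕ) (x : ℝ) : ℝ := Cm m * (1 - x ^ 2) ^ m

/-- The distribution function `G_m(x) = ∫_{-1}^x g_m`. -/
noncomputable def Gm (m : ℕ) (x : ℝ) : ℝ := ∫ t in (-1 : ℝ)..x, gm m t

lemma Cm_pos (m : ℕ) : 0 < Cm m := by
  have h1 : 0 < Real.Gamma (2 * ((m : ℝ) + 1)) := Real.Gamma_pos_of_pos (by positivity)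
  have h2 : 0 < Real.Gamma ((m : ℝ) + 1) := Real.Gamma_pos_of_pos (by positivity)
  exact div_pos h1 (by positivity)

lemma contDiff_gm (m : ℕ) : ContDiff ℝ (∞ : WithTop ℕ∞) (gm m) :=
  contDiff_const.mul ((contDiff_const.sub (contDiff_id.pow 2)).pow m)

lemma continuous_gm (m : ℕ) : Continuous (gm m) := (contDiff_gm m).continuous

lemma hasDerivAt_Gm (m : ℕ) (x : ℝ) : HasDerivAt (Gm m) (gm m x) x :=
  intervalIntegral.integral_hasDerivAt_right ((continuous_gm m).intervalIntegrable _ _)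
    ((continuous_gm m).stronglyMeasurableAtFilter _ _) (continuous_gm m).continuousAt

lemma contDiff_Gm (m : ℕ) : ContDiff ℝ (∞ : WithTop ℕ∞) (Gm m) := by
  rw [contDiff_infty_iff_deriv]
  refine ⟨fun x => (hasDerivAt_Gm m x).differentiableAt, ?_⟩
  have : deriv (Gm m) = gm m := funext fun x => (hasDerivAt_Gm m x).deriv
  rw [this]; exact contDiff_gm m

lemma Gm_pos (m : ℕ) {x : ℝ} (h1 : -1 < x) (h2 : x ≤ 1) : 0 < Gm m x := by
  refine intervalIntegral_pos_of_pos_on ((continuous_gm m).intervalIntegrable _ _) ?_ h1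
  intro t ht
  have ht2 : t ^ 2 < 1 := by nlinarith [ht.1, lt_of_lt_of_le ht.2 h2]
  exact mul_pos (Cm_pos m) (pow_pos (by linarith) m)

/-- The base function whose iterated derivatives we bound. -/
noncomputable def Phi (m : ℕ) (p : ℝ × ℝ) : ℝ := Real.log (2 * Gm m (p.2 * Real.sin p.1))

section shift

variable {E F : Type*} [NormedAddCommGroup E] [NormedSpace ℝ E]
  [NormedAddCommGroup F] [NormedSpace ℝ F]

lemma fderiv_comp_add' (g : E → F) (a x : E) :
    fderiv ℝ (fun y => g (y + a)) x = fderiv ℝ g (x + a) := by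
  by_cases h : DifferentiableAt ℝ g (x + a)
  · have h1 : HasFDerivAt (fun y : E => y + a) (ContinuousLinearMap.id ℝ E) x :=
      (hasFDerivAt_id x).add_const a
    have h2 := (h.hasFDerivAt.comp x h1).fderiv
    simpa [Function.comp_def] using h2
  · rw [fderiv_zero_of_not_differentiableAt h, fderiv_zero_of_not_differentiableAt]
    intro hc
    apply h
    have hc' : DifferentiableAt ℝ (fun y => g (y + a)) ((x + a) + -a) := by
      rw [add_neg_cancel_right]; exact hc
    have h2 := hc'.comp (x + a) ((differentiableAt_id).add_const (-a))
    simpa only [Function.comp_def, id_eq, neg_add_cancel_right] using h2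

lemma iteratedFDeriv_comp_add' (n : ℕ) (g : E → F) (a : E) :
    ∀ x, iteratedFDeriv ℝ n (fun y => g (y + a)) x = iteratedFDeriv ℝ n g (x + a) := by
  induction n with
  | zero =>
    intro x; ext1; simp [iteratedFDeriv_zero_apply]
  | succ n IH =>
    intro x
    rw [iteratedFDeriv_succ_eq_comp_left, iteratedFDeriv_succ_eq_comp_left]
    simp only [Function.comp_apply]
    congr 1
    have hf : iteratedFDeriv ℝ n (fun y => g (y + a)) =
        fun y => iteratedFDeriv ℝ n g (y + a) := funext IH
    rw [hf]
    exact fderiv_comp_add' (iteratedFDeriv ℝ n g) a x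

end shift

/-- The linear isometry equivalence `(x, y) ↦ (-x, y)` on `ℝ × ℝ`. -/
noncomputable def negFstLIE : (ℝ × ℝ) ≃ₗᵢ[ℝ] (ℝ × ℝ) :=
  { (LinearEquiv.neg ℝ).prodCongr (LinearEquiv.refl ℝ ℝ) with
    norm_map' := fun p => by
      simp [Prod.norm_def, LinearEquiv.prodCongr_apply] }

@[simp] lemma negFstLIE_apply (p : ℝ × ℝ) : negFstLIE p = (-p.1, p.2) := rfl

/-- All third-order partial derivatives of `(μ, λ) ↦ log(2 G_m(λ sin(θ-μ)))` are
uniformly bounded when `λ` is kept away from `±1`. -/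
theorem ess_loglik_third_deriv_bounded (m : ℕ) (δ : ℝ) (hδ : δ ∈ Set.Ioo (0 : ℝ) 1) :
    ∃ B : ℝ, ∀ θ μ lam : ℝ, lam ∈ Set.Icc (-1 + δ) (1 - δ) →
      ‖iteratedFDeriv ℝ 3
          (fun q : ℝ × ℝ => Real.log (2 * Gm m (q.2 * Real.sin (θ - q.1)))) (μ, lam)‖ ≤ B := by
  obtain ⟨hδ0, hδ1⟩ := hδ
  -- the open set where `Gm` of the argument is positive
  set U : Set (ℝ × ℝ) := {p : ℝ × ℝ | 0 < Gm m (p.2 * Real.sin p.1)} with hU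
  have hGmc : Continuous fun p : ℝ × ℝ => Gm m (p.2 * Real.sin p.1) :=
    (contDiff_Gm m).continuous.comp (continuous_snd.mul (Real.continuous_sin.comp continuous_fst))
  have hUopen : IsOpen U := isOpen_lt continuous_const hGmc
  -- smoothness of Phi on U
  have hPhi : ContDiffOn ℝ (∞ : WithTop ℕ∞) (Phi m) U := by
    intro p hp
    have hne : (2 * Gm m (p.2 * Real.sin p.1)) ≠ 0 := by
      have := hp; simp only [hU, Set.mem_setOf_eq] at this; positivity
    have hinner : ContDiffAt ℝ (∞ : WithTop ℕ∞)
        (fun p : ℝ × ℝ => 2 * Gm m (p.2 * Real.sin p.1)) p :=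
      (contDiff_const.mul ((contDiff_Gm m).comp
        (contDiff_snd.mul (Real.contDiff_sin.comp contDiff_fst)))).contDiffAt
    exact ((Real.contDiffAt_log.2 hne).comp p hinner).contDiffWithinAt
  -- the compact set
  set K : Set (ℝ × ℝ) := Set.Icc (0 : ℝ) (2 * π) ×ˢ Set.Icc (-1 + δ) (1 - δ) with hKdef
  have hK : IsCompact K := isCompact_Icc.prod isCompact_Icc
  have hKU : K ⊆ U := by
    rintro ⟨s, lam⟩ ⟨hs, hlam⟩
    have hlam' : |lam| ≤ 1 - δ := abs_le.2 ⟨by linarith [hlam.1], hlam.2⟩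
    have hsin : |Real.sin s| ≤ 1 := Real.abs_sin_le_one s
    have habs : |lam * Real.sin s| ≤ 1 - δ := by
      rw [abs_mul]
      calc |lam| * |Real.sin s| ≤ (1 - δ) * 1 :=
            mul_le_mul hlam' hsin (abs_nonneg _) (by linarith)
        _ = 1 - δ := by ring
    obtain ⟨ha, hb⟩ := abs_le.1 habs
    exact Gm_pos m (by linarith) (by linarith)
  -- continuity of the iterated derivative on U
  have hcont : ContinuousOn (iteratedFDeriv ℝ 3 (Phi m)) U := by
    have h1 := hPhi.continuousOn_iteratedFDerivWithin (m := 3)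
      (WithTop.coe_le_coe.2 le_top) hUopen.uniqueDiffOn
    exact h1.congr fun p hp => (iteratedFDerivWithin_of_isOpen 3 hUopen hp).symm
  obtain ⟨B, hB⟩ := hK.exists_bound_of_continuousOn (hcont.mono hKU)
  refine ⟨B, fun θ μ lam hlam => ?_⟩
  have hπ : (0 : ℝ) < 2 * π := by positivity
  set s : ℝ := θ - μ with hs
  set k : ℤ := ⌊s / (2 * π)⌋ with hk
  set r : ℝ := s - k * (2 * π) with hr
  have hr0 : 0 ≤ r := Int.sub_floor_div_mul_nonneg s hπ
  have hr1 : r < 2 * π := Int.sub_floor_div_mul_lt s hπ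
  -- step 1: reduce to Phi at (s, lam)
  have e1 : ‖iteratedFDeriv ℝ 3
      (fun q : ℝ × ℝ => Real.log (2 * Gm m (q.2 * Real.sin (θ - q.1)))) (μ, lam)‖
      = ‖iteratedFDeriv ℝ 3 (Phi m) (s, lam)‖ := by
    have hfun : (fun q : ℝ × ℝ => Real.log (2 * Gm m (q.2 * Real.sin (θ - q.1))))
        = (fun p => Phi m (p + (θ, 0))) ∘ negFstLIE := by
      funext q
      simp only [Function.comp_apply, negFstLIE_apply, Prod.mk_add_mk, add_zero, Phi]
      rw [sub_eq_neg_add]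
    rw [hfun, negFstLIE.norm_iteratedFDeriv_comp_right, iteratedFDeriv_comp_add']
    have : negFstLIE (μ, lam) + (θ, 0) = (s, lam) := by
      simp only [negFstLIE_apply, Prod.mk_add_mk, add_zero, hs]
      rw [neg_add_eq_sub]
    rw [this]
  -- step 2: reduce to Phi at (r, lam) by periodicity
  have e2 : ‖iteratedFDeriv ℝ 3 (Phi m) (s, lam)‖
      = ‖iteratedFDeriv ℝ 3 (Phi m) (r, lam)‖ := by
    have hper : (fun p : ℝ × ℝ => Phi m (p + ((k : ℝ) * (2 * π), 0))) = Phi m := by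
      funext p
      simp only [Phi]
      have h1 : (p + ((k : ℝ) * (2 * π), (0 : ℝ))).1 = p.1 + (k : ℝ) * (2 * π) := rfl
      have h2 : (p + ((k : ℝ) * (2 * π), (0 : ℝ))).2 = p.2 + 0 := rfl
      rw [h1, h2, add_zero, Real.sin_add_int_mul_two_pi]
    calc ‖iteratedFDeriv ℝ 3 (Phi m) (s, lam)‖
        = ‖iteratedFDeriv ℝ 3 (fun p => Phi m (p + ((k : ℝ) * (2 * π), 0))) (r, lam)‖ := by
          rw [iteratedFDeriv_comp_add']
          have hpt : ((r, lam) : ℝ × ℝ) + ((k : ℝ) * (2 * π), 0) = (s, lam) := by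
            simp only [Prod.mk_add_mk, add_zero, Prod.mk.injEq]
            exact ⟨by rw [hr]; ring, trivial⟩
          rw [hpt]
      _ = ‖iteratedFDeriv ℝ 3 (Phi m) (r, lam)‖ := by rw [hper]
  rw [e1, e2]
  exact hB (r, lam) ⟨⟨hr0, hr1.le⟩, hlam⟩
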